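/- In the one-period constrained robust market (P convex set of measures, H(P) and C_H(P) convex and closed, NA(P) holds), the set K(P) := {H·ΔS − X : H ∈ H, X ≥ 0 P-q.s.} is P-quasi-surely closed: if W_n ∈ K(P) and W_n → W P-q.s., then W ∈ K(P). -/

import Mathlib

open MeasureTheory Filter Set
open scoped RealInnerProductSpace ENNReal

noncomputable section

variable {Ω : Type*} [MeasurableSpace Ω] {d : ℕ}

/-- Quasi-sure support of `ΔS` under a family of measures. -/
def qsSupport (Pfam : Set (Measure Ω)) (ΔS : Ω → EuclideanSpace ℝ (Fin d)) :
    Set (EuclideanSpace ℝ (Fin d)) :=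
  ⋂₀ {A | IsClosed A ∧ ∀ P ∈ Pfam, ∀ᵐ ω ∂P, ΔS ω ∈ A}

/-- `N⊥(𝒫)`, the span of the quasi-sure support. -/
def NperpF (Pfam : Set (Measure Ω)) (ΔS : Ω → EuclideanSpace ℝ (Fin d)) :
    Submodule ℝ (EuclideanSpace ℝ (Fin d)) :=
  Submodule.span ℝ (qsSupport Pfam ΔS)

/-- The projected strategy set `𝓗(𝒫)`. -/
def projSet (Pfam : Set (Measure Ω)) (ΔS : Ω → EuclideanSpace ℝ (Fin d))
    (𝓗 : Set (EuclideanSpace ℝ (Fin d))) : Set (EuclideanSpace ℝ (Fin d)) :=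
  (fun h => ((Submodule.orthogonalProjection (NperpF Pfam ΔS) h : EuclideanSpace ℝ (Fin d)))) '' 𝓗

/-- The generated projected cone `C_𝓗(𝒫)`. -/
def projCone (Pfam : Set (Measure Ω)) (ΔS : Ω → EuclideanSpace ℝ (Fin d))
    (𝓗 : Set (EuclideanSpace ℝ (Fin d))) : Set (EuclideanSpace ℝ (Fin d)) :=
  {x | ∃ c : ℝ, 0 ≤ c ∧ ∃ h ∈ projSet Pfam ΔS 𝓗, x = c • h}

/-- NA(𝒫): no quasi-sure arbitrage among admissible strategies. -/
def NAqs (Pfam : Set (Measure Ω)) (ΔS : Ω → EuclideanSpace ℝ (Fin d))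
    (𝓗 : Set (EuclideanSpace ℝ (Fin d))) : Prop :=
  ∀ H ∈ 𝓗, (∀ P ∈ Pfam, ∀ᵐ ω ∂P, 0 ≤ ⟪H, ΔS ω⟫) →
    (∀ P ∈ Pfam, ∀ᵐ ω ∂P, ⟪H, ΔS ω⟫ = 0)

/-- The quasi-sure superhedging price of `f`, valued in the extended reals. -/
def piQS (Pfam : Set (Measure Ω)) (ΔS : Ω → EuclideanSpace ℝ (Fin d))
    (𝓗 : Set (EuclideanSpace ℝ (Fin d))) (f : Ω → ℝ) : EReal :=
  sInf {x : EReal | ∃ r : ℝ, x = (r : EReal) ∧ ∃ H ∈ 𝓗,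
    ∀ P ∈ Pfam, ∀ᵐ ω ∂P, f ω ≤ r + ⟪H, ΔS ω⟫}

/-- The expectation of `f` under `Q` in the extended sense, with convention `∞ - ∞ = -∞`. -/
def eexp (Q : Measure Ω) (f : Ω → ℝ) : EReal :=
  ((∫⁻ ω, ENNReal.ofReal (f ω) ∂Q : ℝ≥0∞) : EReal) -
    ((∫⁻ ω, ENNReal.ofReal (-f ω) ∂Q : ℝ≥0∞) : EReal)

lemma ae_mem_qsSupport (Pfam : Set (Measure Ω)) (ΔS : Ω → EuclideanSpace ℝ (Fin d)) :
    ∀ P ∈ Pfam, ∀ᵐ ω ∂P, ΔS ω ∈ qsSupport Pfam ΔS := by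
  intro P hP
  obtain ⟨T, hTc, hTsub, hTeq⟩ := TopologicalSpace.isOpen_sUnion_countable
    (compl '' {A : Set (EuclideanSpace ℝ (Fin d)) |
      IsClosed A ∧ ∀ P ∈ Pfam, ∀ᵐ ω ∂P, ΔS ω ∈ A})
    (by rintro _ ⟨A, hA, rfl⟩; exact hA.1.isOpen_compl)
  rw [ae_iff]
  have h1 : {ω | ¬ ΔS ω ∈ qsSupport Pfam ΔS} = ⋃ B ∈ T, ΔS ⁻¹' B := by
    have : {ω | ¬ ΔS ω ∈ qsSupport Pfam ΔS} = ΔS ⁻¹' (⋃₀ T) := by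
      rw [hTeq]
      ext ω
      simp only [mem_setOf_eq, mem_preimage, qsSupport, ← compl_sInter, mem_compl_iff]
    rw [this, sUnion_eq_biUnion, preimage_iUnion₂]
  rw [h1, measure_biUnion_null_iff hTc]
  intro B hB
  obtain ⟨A, hA, rfl⟩ := hTsub hB
  have h2 := (hA.2 P hP)
  rw [ae_iff] at h2
  exact h2

lemma inner_eq_inner_proj (Pfam : Set (Measure Ω)) (ΔS : Ω → EuclideanSpace ℝ (Fin d))
    (G : EuclideanSpace ℝ (Fin d)) {v : EuclideanSpace ℝ (Fin d)}
    (hv : v ∈ NperpF Pfam ΔS) :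
    ⟪G, v⟫ = ⟪((Submodule.orthogonalProjection (NperpF Pfam ΔS) G : EuclideanSpace ℝ (Fin d))), v⟫ := by
  have h := Submodule.sub_starProjection_mem_orthogonal (K := NperpF Pfam ΔS) G
  have h2 := (Submodule.mem_orthogonal' _ _).1 h v hv
  rw [inner_sub_left, sub_eq_zero] at h2
  exact h2

/-- Lemma 4.3: the set `K(𝒫) = {H·ΔS − X : H ∈ 𝓗, X ≥ 0 𝒫-q.s.}` is
`𝒫`-quasi-surely closed. -/
theorem stmt11 {Ω : Type*} [TopologicalSpace Ω] [PolishSpace Ω] [MeasurableSpace Ω]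
    [BorelSpace Ω] {d : ℕ} (Pfam : Set (Measure Ω))
    (hprob : ∀ P ∈ Pfam, IsProbabilityMeasure P)
    (hconvex : ∀ P ∈ Pfam, ∀ P' ∈ Pfam, ∀ a b : ℝ≥0∞, a + b = 1 → a • P + b • P' ∈ Pfam)
    (ΔS : Ω → EuclideanSpace ℝ (Fin d)) (hmeas : Measurable ΔS)
    (𝓗 : Set (EuclideanSpace ℝ (Fin d)))
    (hHconv : Convex ℝ (projSet Pfam ΔS 𝓗)) (hHclosed : IsClosed (projSet Pfam ΔS 𝓗))
    (hCclosed : IsClosed (projCone Pfam ΔS 𝓗))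
    (hNA : NAqs Pfam ΔS 𝓗)
    (W : ℕ → Ω → ℝ) (Wlim : Ω → ℝ)
    (hW : ∀ n, ∃ H ∈ 𝓗, ∃ X : Ω → ℝ, (∀ P ∈ Pfam, ∀ᵐ ω ∂P, 0 ≤ X ω) ∧
      ∀ ω, W n ω = ⟪H, ΔS ω⟫ - X ω)
    (hconv : ∀ P ∈ Pfam, ∀ᵐ ω ∂P, Tendsto (fun n => W n ω) atTop (nhds (Wlim ω))) :
    ∃ H ∈ 𝓗, ∃ X : Ω → ℝ, (∀ P ∈ Pfam, ∀ᵐ ω ∂P, 0 ≤ X ω) ∧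
      ∀ P ∈ Pfam, ∀ᵐ ω ∂P, Wlim ω = ⟪H, ΔS ω⟫ - X ω := by
  unfold projCone at hCclosed
  unfold projSet at hHconv hHclosed hCclosed
  unfold NAqs at hNA
  classical
  choose Hs hHs Xs hXs hWeq using hW
  set K : Submodule ℝ (EuclideanSpace ℝ (Fin d)) := NperpF Pfam ΔS with hK
  set h : ℕ → EuclideanSpace ℝ (Fin d) :=
    fun n => (Submodule.orthogonalProjection K (Hs n) : EuclideanSpace ℝ (Fin d)) with hh
  set pS : Set (EuclideanSpace ℝ (Fin d)) :=
    (fun h => ((Submodule.orthogonalProjection (NperpF Pfam ΔS) h : EuclideanSpace ℝ (Fin d)))) '' 𝓗 with hpS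
  have hmemP : ∀ n, h n ∈ pS := fun n => ⟨Hs n, hHs n, rfl⟩
  -- the "good" event under each P
  have hgood : ∀ P ∈ Pfam, ∀ᵐ ω ∂P,
      (∀ n, 0 ≤ Xs n ω) ∧ Tendsto (fun n => W n ω) atTop (nhds (Wlim ω)) ∧
      ΔS ω ∈ qsSupport Pfam ΔS :=
    fun P hP => ((ae_all_iff.2 fun n => hXs n P hP).and
      ((hconv P hP).and (ae_mem_qsSupport Pfam ΔS P hP)))
  -- on good events, ⟪G, ΔS ω⟫ = ⟪proj G, ΔS ω⟫
  have hip : ∀ (G : EuclideanSpace ℝ (Fin d)) {ω : Ω}, ΔS ω ∈ qsSupport Pfam ΔS →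
      ⟪G, ΔS ω⟫ = ⟪((Submodule.orthogonalProjection K G : EuclideanSpace ℝ (Fin d))), ΔS ω⟫ :=
    fun G ω hω => inner_eq_inner_proj Pfam ΔS G (Submodule.subset_span hω)
  by_cases hbd : ∃ C : ℝ, {n | ‖h n‖ ≤ C}.Infinite
  · -- bounded case: extract convergent subsequence
    obtain ⟨C, hC⟩ := hbd
    obtain ⟨φ, hφ, hφmem⟩ := extraction_of_frequently_atTop
      (Nat.frequently_atTop_iff_infinite.2 hC)
    have hball : ∀ n, h (φ n) ∈ Metric.closedBall (0 : EuclideanSpace ℝ (Fin d)) C := by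
      intro n; simpa [Metric.mem_closedBall, dist_zero_right] using hφmem n
    obtain ⟨hinf, _, ψ, hψ, hlim⟩ :=
      (isCompact_closedBall (0 : EuclideanSpace ℝ (Fin d)) C).tendsto_subseq hball
    set σ : ℕ → ℕ := φ ∘ ψ with hσ
    have hσmono : StrictMono σ := hφ.comp hψ
    have hlim' : Tendsto (fun n => h (σ n)) atTop (nhds hinf) := hlim
    have hinfmem : hinf ∈ pS :=
      hHclosed.mem_of_tendsto hlim' (Eventually.of_forall fun n => hmemP _)
    obtain ⟨Hf, hHf, hHfproj⟩ := hinfmem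
    have hHfproj' : ((Submodule.orthogonalProjection K Hf : EuclideanSpace ℝ (Fin d))) = hinf := hHfproj
    refine ⟨Hf, hHf, fun ω => ⟪Hf, ΔS ω⟫ - Wlim ω, ?_, ?_⟩
    · intro P hP
      filter_upwards [hgood P hP] with ω hω
      obtain ⟨hX0, hWt, hωsupp⟩ := hω
      have key : Tendsto (fun n => ⟪h (σ n), ΔS ω⟫ - W (σ n) ω) atTop
          (nhds (⟪hinf, ΔS ω⟫ - Wlim ω)) :=
        (hlim'.inner tendsto_const_nhds).sub (hWt.comp hσmono.tendsto_atTop)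
      have hnn : ∀ n, 0 ≤ ⟪h (σ n), ΔS ω⟫ - W (σ n) ω := by
        intro n
        have := hWeq (σ n) ω
        rw [hip (Hs (σ n)) hωsupp] at this
        have : ⟪h (σ n), ΔS ω⟫ - W (σ n) ω = Xs (σ n) ω := by
          rw [this]; ring
        rw [this]; exact hX0 _
      have h0 : 0 ≤ ⟪hinf, ΔS ω⟫ - Wlim ω := ge_of_tendsto' key hnn
      rwa [hip Hf hωsupp, hHfproj']
    · intro P hP
      filter_upwards with ω
      ring
  · -- unbounded case: contradiction with NA
    exfalso
    push_neg at hbd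
    have htop : Tendsto (fun n => ‖h n‖) atTop atTop := by
      rw [tendsto_atTop]
      intro b
      have : ∀ᶠ n in atTop, n ∉ {n | ‖h n‖ ≤ b} := by
        rw [← Nat.cofinite_eq_atTop]
        exact (Set.finite_coe_iff.1 (hbd b)).eventually_cofinite_notMem
      exact this.mono fun n hn => (lt_of_not_ge hn).le
    obtain ⟨N, hN⟩ := (htop.eventually_ge_atTop 1).exists_forall_of_atTop
    set g : ℕ → EuclideanSpace ℝ (Fin d) := fun n => ‖h (n + N)‖⁻¹ • h (n + N) with hg
    have hnorm1 : ∀ n, ‖g n‖ = 1 := by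
      intro n
      have h1 : (1 : ℝ) ≤ ‖h (n + N)‖ := hN (n + N) (Nat.le_add_left _ _)
      have h0 : ‖h (n + N)‖ ≠ 0 := by linarith
      simp [hg, norm_smul, abs_of_nonneg (inv_nonneg.2 (norm_nonneg _)), inv_mul_cancel₀ h0]
    have hsphere : ∀ n, g n ∈ Metric.sphere (0 : EuclideanSpace ℝ (Fin d)) 1 := by
      intro n; simpa [mem_sphere_zero_iff_norm] using hnorm1 n
    obtain ⟨ginf, hginfmem, ψ, hψ, hglim⟩ :=
      (isCompact_sphere (0 : EuclideanSpace ℝ (Fin d)) 1).tendsto_subseq hsphere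
    have hginf1 : ‖ginf‖ = 1 := mem_sphere_zero_iff_norm.1 hginfmem
    have hginfCone : ginf ∈ {x | ∃ c : ℝ, 0 ≤ c ∧ ∃ h' ∈ pS, x = c • h'} := by
      refine hCclosed.mem_of_tendsto hglim (Eventually.of_forall fun n => ?_)
      exact ⟨‖h (ψ n + N)‖⁻¹, inv_nonneg.2 (norm_nonneg _), h (ψ n + N), hmemP _, rfl⟩
    obtain ⟨c, hc, h', hh'pS, hgeq⟩ := hginfCone
    obtain ⟨H', hH', hH'proj⟩ := hh'pS
    have hH'proj' : ((Submodule.orthogonalProjection K H' : EuclideanSpace ℝ (Fin d))) = h' := hH'proj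
    have hcpos : 0 < c := by
      rcases hc.lt_or_eq with h | h
      · exact h
      · exfalso; rw [← h, zero_smul] at hgeq; rw [hgeq] at hginf1; simp at hginf1
    -- q.s. nonnegativity of ⟪ginf, ΔS⟫
    have hginfqs : ∀ P ∈ Pfam, ∀ᵐ ω ∂P, 0 ≤ ⟪ginf, ΔS ω⟫ := by
      intro P hP
      filter_upwards [hgood P hP] with ω hω
      obtain ⟨hX0, hWt, hωsupp⟩ := hω
      have hbound : ∀ n, ‖h (n + N)‖⁻¹ * W (n + N) ω ≤ ⟪g n, ΔS ω⟫ := by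
        intro n
        have hinv : 0 ≤ ‖h (n + N)‖⁻¹ := inv_nonneg.2 (norm_nonneg _)
        have e1 : ⟪g n, ΔS ω⟫ = ‖h (n + N)‖⁻¹ * ⟪h (n + N), ΔS ω⟫ :=
          real_inner_smul_left _ _ _
        have e2 : ⟪h (n + N), ΔS ω⟫ = W (n + N) ω + Xs (n + N) ω := by
          rw [← hip (Hs (n + N)) hωsupp, hWeq (n + N) ω]; ring
        rw [e1, e2]
        nlinarith [hX0 (n + N)]
      have hinvlim : Tendsto (fun n => ‖h (n + N)‖⁻¹) atTop (nhds 0) :=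
        tendsto_inv_atTop_zero.comp (htop.comp (tendsto_add_atTop_nat N))
      have hblim : Tendsto (fun n => ‖h (n + N)‖⁻¹ * W (n + N) ω) atTop (nhds 0) := by
        have := hinvlim.mul (hWt.comp (tendsto_add_atTop_nat N))
        simpa using this
      have halim : Tendsto (fun n => ⟪g (ψ n), ΔS ω⟫) atTop (nhds ⟪ginf, ΔS ω⟫) :=
        hglim.inner tendsto_const_nhds
      exact le_of_tendsto_of_tendsto' (hblim.comp hψ.tendsto_atTop) halim
        fun n => hbound (ψ n)
    -- NA forces ⟪ginf, ΔS⟫ = 0 q.s.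
    have hH'nn : ∀ P ∈ Pfam, ∀ᵐ ω ∂P, 0 ≤ ⟪H', ΔS ω⟫ := by
      intro P hP
      filter_upwards [hginfqs P hP, hgood P hP] with ω h0 hω
      have : ⟪H', ΔS ω⟫ = ⟪h', ΔS ω⟫ := by rw [hip H' hω.2.2, hH'proj']
      rw [this]
      have : ⟪ginf, ΔS ω⟫ = c * ⟪h', ΔS ω⟫ := by
        rw [hgeq]; exact real_inner_smul_left _ _ _
      nlinarith
    have hH'zero := hNA H' hH' hH'nn
    have hginfzero : ∀ P ∈ Pfam, ∀ᵐ ω ∂P, ⟪ginf, ΔS ω⟫ = 0 := by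
      intro P hP
      filter_upwards [hH'zero P hP, hgood P hP] with ω h0 hω
      have e1 : ⟪H', ΔS ω⟫ = ⟪h', ΔS ω⟫ := by rw [hip H' hω.2.2, hH'proj']
      rw [hgeq]
      rw [real_inner_smul_left, ← e1, h0, mul_zero]
    -- hence the support is ⊥ ker⟪ginf,·⟫, so ginf ⊥ K; but ginf ∈ K
    have hsub : qsSupport Pfam ΔS ⊆ {x | ⟪ginf, x⟫ = 0} := by
      apply sInter_subset_of_mem
      refine ⟨?_, ?_⟩
      · exact isClosed_eq (continuous_const.inner continuous_id) continuous_const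
      · intro P hP
        filter_upwards [hginfzero P hP] with ω hω using hω
    have hKsub : K ≤ LinearMap.ker (innerSL ℝ ginf).toLinearMap := by
      rw [hK]
      apply Submodule.span_le.2
      intro x hx
      simp only [SetLike.mem_coe, LinearMap.mem_ker, ContinuousLinearMap.coe_coe,
        innerSL_apply_apply]
      exact hsub hx
    have hginfK : ginf ∈ K := by
      rw [hgeq]
      exact Submodule.smul_mem _ c (by rw [← hH'proj']; exact Submodule.coe_mem _)
    have hzero : ⟪ginf, ginf⟫ = 0 := by
      have := hKsub hginfK
      simpa only [LinearMap.mem_ker, ContinuousLinearMap.coe_coe, innerSL_apply_apply] using this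
    rw [inner_self_eq_zero.1 hzero] at hginf1
    simp at hginf1
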